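/- For α > 1 there exist constants 0 < c ≤ C < ∞ (depending only on α) such that for all integers N ≥ 1, the expected number D_N of distinct values observed in N i.i.d. draws from the Zipf distribution p_j = j^{-α}/ζ(α) on the positive integers satisfies c·N^{1/α} ≤ E[D_N] ≤ C·N^{1/α}. -/

import Mathlib

open Real Filter

lemma aux_mvt (α : ℝ) (hα : 1 < α) (b : ℝ) (hb : 1 ≤ b) :
    (α - 1) * (b + 1) ^ (-α) ≤ b ^ (1 - α) - (b + 1) ^ (1 - α) := by
  have hb0 : (0:ℝ) < b := lt_of_lt_of_le one_pos hb
  obtain ⟨ξ, hξ, hslope⟩ := exists_hasDerivAt_eq_slope (fun t => t ^ (1 - α))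
      (fun t => (1 - α) * t ^ (-α)) (by linarith : b < b + 1)
      (by
        apply continuousOn_of_forall_continuousAt
        intro t ht
        exact Real.continuousAt_rpow_const t _ (Or.inl (by nlinarith [ht.1] : t ≠ 0)))
      (by
        intro t ht
        have h0 : t ≠ 0 := by nlinarith [ht.1]
        have := Real.hasDerivAt_rpow_const (x := t) (p := 1 - α) (Or.inl h0)
        convert this using 1
        ring_nf)
  have hξ0 : 0 < ξ := lt_trans hb0 hξ.1
  have hmono : (b + 1) ^ (-α) ≤ ξ ^ (-α) :=
    Real.rpow_le_rpow_of_nonpos hξ0 hξ.2.le (by linarith)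
  have h1 : (1 - α) * ξ ^ (-α) = (b + 1) ^ (1 - α) - b ^ (1 - α) := by
    rw [hslope]; ring_nf
  nlinarith [Real.rpow_nonneg (le_of_lt hξ0) (-α)]

lemma aux_tele (β : ℝ) (hβ : β < 0) (M : ℝ) (hM : 1 ≤ M) :
    HasSum (fun k : ℕ => (M + k) ^ β - (M + k + 1) ^ β) (M ^ β) := by
  have hpos : ∀ k : ℕ, (0:ℝ) < M + k := fun k => by positivity
  have hnn : ∀ k : ℕ, 0 ≤ (M + k) ^ β - (M + k + 1) ^ β := by
    intro k
    have := Real.rpow_le_rpow_of_nonpos (hpos k) (by linarith : M + k ≤ M + k + 1) hβ.le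
    linarith
  rw [hasSum_iff_tendsto_nat_of_nonneg hnn]
  have hps : ∀ n : ℕ, ∑ i ∈ Finset.range n, ((M + i) ^ β - (M + i + 1) ^ β)
      = M ^ β - (M + n) ^ β := by
    intro n
    have := Finset.sum_range_sub' (fun i : ℕ => (M + i) ^ β) n
    rw [show M ^ β - (M + (n:ℝ)) ^ β = (M + ((0:ℕ):ℝ)) ^ β - (M + (n:ℝ)) ^ β by norm_num,
      ← this]
    apply Finset.sum_congr rfl
    intro i _
    push_cast
    ring_nf
  simp only [hps]
  have h0 : Tendsto (fun n : ℕ => (M + n) ^ β) atTop (nhds 0) := by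
    have h1 : Tendsto (fun n : ℕ => M + (n:ℝ)) atTop atTop :=
      tendsto_atTop_add_const_left _ _ tendsto_natCast_atTop_atTop
    have h2 : Tendsto (fun x : ℝ => x ^ (-(-β))) atTop (nhds 0) :=
      tendsto_rpow_neg_atTop (by linarith)
    simpa [Function.comp_def] using h2.comp h1
  simpa using (tendsto_const_nhds (x := M ^ β)).sub h0

lemma aux_tail (α : ℝ) (hα : 1 < α) (M : ℕ) (hM : 1 ≤ M) :
    ∑' k : ℕ, ((M:ℝ) + k + 1) ^ (-α) ≤ (M:ℝ) ^ (1 - α) / (α - 1) := by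
  have hM1 : (1:ℝ) ≤ (M:ℝ) := by exact_mod_cast hM
  have htele := aux_tele (1 - α) (by linarith) (M:ℝ) hM1
  have hsum : Summable (fun k : ℕ => ((M:ℝ) + k + 1) ^ (-α)) := by
    have h0 : Summable (fun n : ℕ => (n:ℝ) ^ (-α)) :=
      Real.summable_nat_rpow.mpr (by linarith)
    have := (summable_nat_add_iff (M + 1)).mpr h0
    apply this.congr
    intro k; push_cast; ring_nf
  have hle : ∀ k : ℕ, ((M:ℝ) + k + 1) ^ (-α)
      ≤ (((M:ℝ) + k) ^ (1 - α) - ((M:ℝ) + k + 1) ^ (1 - α)) / (α - 1) := by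
    intro k
    have hb : (1:ℝ) ≤ (M:ℝ) + k := by
      have : (0:ℝ) ≤ (k:ℝ) := Nat.cast_nonneg k
      linarith
    have := aux_mvt α hα ((M:ℝ) + k) hb
    rw [le_div_iff₀ (by linarith : (0:ℝ) < α - 1)]
    linarith
  calc ∑' k : ℕ, ((M:ℝ) + k + 1) ^ (-α)
      ≤ ∑' k : ℕ, (((M:ℝ) + k) ^ (1 - α) - ((M:ℝ) + k + 1) ^ (1 - α)) / (α - 1) :=
        Summable.tsum_le_tsum hle hsum (htele.summable.div_const _)
    _ = (M:ℝ) ^ (1 - α) / (α - 1) := by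
        rw [tsum_div_const, htele.tsum_eq]

lemma aux_sumtail (α : ℝ) (hα : 1 < α) (M : ℕ) :
    Summable (fun k : ℕ => ((M:ℝ) + k + 1) ^ (-α)) := by
  have h0 : Summable (fun n : ℕ => (n:ℝ) ^ (-α)) :=
    Real.summable_nat_rpow.mpr (by linarith)
  have := (summable_nat_add_iff (M + 1)).mpr h0
  apply this.congr
  intro k; push_cast; ring_nf

/-- Zipf occupancy law: for the Zipf distribution `p_j = j^{-α}/ζ(α)` with `α > 1`, the
expected number of distinct values in `N` i.i.d. draws, `∑_j (1 - (1 - p_j)^N)`, is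
`Θ(N^{1/α})`. -/
theorem stmt10 (α : ℝ) (hα : 1 < α) :
    ∃ c C : ℝ, 0 < c ∧ c ≤ C ∧
      ∀ N : ℕ, 1 ≤ N →
        c * (N : ℝ) ^ (1 / α)
            ≤ (∑' j : ℕ+, (1 - (1 - ((j : ℕ) : ℝ) ^ (-α) / (∑' i : ℕ+, ((i : ℕ) : ℝ) ^ (-α))) ^ N)) ∧
        (∑' j : ℕ+, (1 - (1 - ((j : ℕ) : ℝ) ^ (-α) / (∑' i : ℕ+, ((i : ℕ) : ℝ) ^ (-α))) ^ N))
            ≤ C * (N : ℝ) ^ (1 / α) := by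
  have hα0 : (0:ℝ) < α := by linarith
  set ζ : ℝ := ∑' i : ℕ+, ((i : ℕ) : ℝ) ^ (-α) with hζdef
  have hsumN : Summable (fun n : ℕ => (n:ℝ) ^ (-α)) :=
    Real.summable_nat_rpow.mpr (by linarith)
  have hsumP : Summable (fun j : ℕ+ => ((j : ℕ) : ℝ) ^ (-α)) :=
    hsumN.comp_injective PNat.coe_injective
  have hterm_nonneg : ∀ j : ℕ+, 0 ≤ ((j : ℕ) : ℝ) ^ (-α) :=
    fun j => Real.rpow_nonneg (Nat.cast_nonneg _) _
  have hζ1 : 1 ≤ ζ := by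
    have := Summable.le_tsum hsumP 1 (fun j _ => hterm_nonneg j)
    simpa using this
  have hζ0 : (0:ℝ) < ζ := by linarith
  have hterm_le : ∀ j : ℕ+, ((j : ℕ) : ℝ) ^ (-α) ≤ ζ :=
    fun j => Summable.le_tsum hsumP j (fun i _ => hterm_nonneg i)
  -- abbreviation for p_j
  set p : ℕ+ → ℝ := fun j => ((j : ℕ) : ℝ) ^ (-α) / ζ with hpdef
  have hp_pos : ∀ j : ℕ+, 0 < p j := by
    intro j
    apply div_pos _ hζ0
    exact Real.rpow_pos_of_pos (by exact_mod_cast j.pos) _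
  have hp_le1 : ∀ j : ℕ+, p j ≤ 1 := by
    intro j
    rw [div_le_one hζ0]
    exact hterm_le j
  -- per-N facts about F j := 1 - (1 - p j)^N
  refine ⟨1 / (2 * (ζ + 1)), max (1 + 2 ^ (α - 1) / (α - 1)) (1 / (2 * (ζ + 1))),
    by positivity, le_max_right _ _, ?_⟩
  intro N hN
  set F : ℕ+ → ℝ := fun j => 1 - (1 - p j) ^ N with hFdef
  have hF_nonneg : ∀ j, 0 ≤ F j := by
    intro j
    have h1 : (1 - p j) ^ N ≤ 1 :=
      pow_le_one₀ (by linarith [hp_le1 j]) (by linarith [hp_pos j])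
    simp only [hFdef]; linarith
  have hF_le1 : ∀ j, F j ≤ 1 := by
    intro j
    have h0 : (0:ℝ) ≤ (1 - p j) ^ N := pow_nonneg (by linarith [hp_le1 j]) N
    simp only [hFdef]; linarith
  have hF_leNp : ∀ j, F j ≤ N * p j := by
    intro j
    have := one_add_mul_le_pow (a := -p j) (by linarith [hp_le1 j]) N
    simp only [hFdef]
    have h2 : (1 + -p j) ^ N = (1 - p j) ^ N := by ring_nf
    rw [h2] at this
    linarith
  have hF_summable : Summable F := by
    apply Summable.of_nonneg_of_le hF_nonneg hF_leNp
    exact (hsumP.div_const ζ).mul_left (N:ℝ)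
  -- key pow upper bound
  have hpow_le : ∀ j : ℕ+, (1 - p j) ^ N ≤ 1 / (1 + N * p j) := by
    intro j
    have hp1 := hp_pos j; have hp2 := hp_le1 j
    have h1 : (1 - p j) ^ N * (1 + p j) ^ N ≤ 1 := by
      rw [← mul_pow]
      apply pow_le_one₀ (by nlinarith) (by nlinarith)
    have h2 : 1 + (N:ℝ) * p j ≤ (1 + p j) ^ N :=
      one_add_mul_le_pow (by linarith) N
    have hpos : (0:ℝ) < 1 + (N:ℝ) * p j := by positivity
    rw [le_div_iff₀ hpos]
    calc (1 - p j) ^ N * (1 + (N:ℝ) * p j) ≤ (1 - p j) ^ N * (1 + p j) ^ N :=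
          mul_le_mul_of_nonneg_left h2 (pow_nonneg (by linarith) N)
      _ ≤ 1 := h1
  -- setup x and M
  set x : ℝ := (N:ℝ) ^ (1 / α) with hxdef
  have hN1 : (1:ℝ) ≤ (N:ℝ) := by exact_mod_cast hN
  have hx1 : (1:ℝ) ≤ x := Real.one_le_rpow hN1 (by positivity)
  have hx0 : (0:ℝ) < x := by linarith
  set M : ℕ := ⌊x⌋₊ with hMdef
  have hM1 : 1 ≤ M := Nat.le_floor (by exact_mod_cast hx1)
  have hM1R : (1:ℝ) ≤ (M:ℝ) := by exact_mod_cast hM1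
  have hMx : (M:ℝ) ≤ x := Nat.floor_le (by positivity)
  have hxM : x ≤ 2 * M := by
    have := Nat.lt_floor_add_one x
    rw [← hMdef] at this
    linarith
  have hNx : (N:ℝ) = x ^ α := by
    rw [hxdef, ← Real.rpow_mul (Nat.cast_nonneg N), one_div_mul_cancel (ne_of_gt hα0),
      Real.rpow_one]
  -- the tsum in the statement is tsum of F
  have hstmt : (∑' j : ℕ+, (1 - (1 - ((j : ℕ) : ℝ) ^ (-α) / (∑' i : ℕ+, ((i : ℕ) : ℝ) ^ (-α))) ^ N))
      = ∑' j : ℕ+, F j := rfl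
  rw [hstmt]
  constructor
  · -- LOWER BOUND
    have hkey : ∀ k ∈ Finset.range M, 1 / (ζ + 1) ≤ F k.succPNat := by
      intro k hk
      rw [Finset.mem_range] at hk
      have hjM : ((k.succPNat : ℕ) : ℝ) ≤ (M:ℝ) := by
        have : k + 1 ≤ M := hk
        exact_mod_cast this
      have hj1 : (1:ℝ) ≤ ((k.succPNat : ℕ) : ℝ) := by
        exact_mod_cast k.succPNat.one_le
      have hjα : ((k.succPNat : ℕ) : ℝ) ^ α ≤ (N:ℝ) := by
        rw [hNx]
        exact Real.rpow_le_rpow (by linarith) (by linarith) (le_of_lt hα0)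
      have hja_pos : (0:ℝ) < ((k.succPNat : ℕ) : ℝ) ^ α := by positivity
      have hinv : (1:ℝ) / N ≤ ((k.succPNat : ℕ) : ℝ) ^ (-α) := by
        rw [Real.rpow_neg (by linarith), ← one_div]
        exact one_div_le_one_div_of_le hja_pos hjα
      have hNp : 1 / ζ ≤ (N:ℝ) * p k.succPNat := by
        have hN0 : (0:ℝ) < N := by linarith
        have h5 : (N:ℝ) * ((1/N) / ζ) ≤ (N:ℝ) * (((k.succPNat : ℕ) : ℝ) ^ (-α) / ζ) := by
          apply mul_le_mul_of_nonneg_left _ (le_of_lt hN0)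
          gcongr
        have heq : (N:ℝ) * ((1/N) / ζ) = 1 / ζ := by field_simp
        show 1 / ζ ≤ (N:ℝ) * (((k.succPNat : ℕ) : ℝ) ^ (-α) / ζ)
        linarith
      have hpow := hpow_le k.succPNat
      have h3 : 1 / (1 + (N:ℝ) * p k.succPNat) ≤ 1 / (1 + 1 / ζ) := by
        apply one_div_le_one_div_of_le (by positivity)
        linarith
      have heq2 : 1 - 1 / (1 + 1 / ζ) = 1 / (ζ + 1) := by field_simp; ring
      simp only [hFdef]
      linarith
    have hsum_ge : ∑ j ∈ (Finset.range M).image Nat.succPNat, F j ≤ ∑' j : ℕ+, F j := by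
      exact Summable.sum_le_tsum _ (fun j _ => hF_nonneg j) hF_summable
    rw [Finset.sum_image (fun a _ b _ h => Nat.succPNat_injective h)] at hsum_ge
    have hcard : (M:ℝ) * (1 / (ζ + 1)) ≤ ∑ k ∈ Finset.range M, F k.succPNat := by
      calc (M:ℝ) * (1 / (ζ + 1)) = ∑ _k ∈ Finset.range M, (1 / (ζ + 1)) := by
            rw [Finset.sum_const, Finset.card_range, nsmul_eq_mul]
        _ ≤ ∑ k ∈ Finset.range M, F k.succPNat := Finset.sum_le_sum hkey
    have : 1 / (2 * (ζ + 1)) * x ≤ (M:ℝ) * (1 / (ζ + 1)) := by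
      rw [div_mul_eq_mul_div, one_mul, mul_one_div, div_le_div_iff₀ (by positivity) (by positivity)]
      nlinarith
    linarith
  · -- UPPER BOUND
    have hG : Summable (fun n : ℕ => F n.succPNat) :=
      hF_summable.comp_injective Nat.succPNat_injective
    have hconv : ∑' j : ℕ+, F j = ∑' n : ℕ, F n.succPNat := by
      rw [← Equiv.pnatEquivNat.symm.tsum_eq F]
      rfl
    have hsplit := Summable.sum_add_tsum_nat_add M hG
    have hfirst : ∑ i ∈ Finset.range M, F i.succPNat ≤ (M:ℝ) := by
      calc ∑ i ∈ Finset.range M, F i.succPNat ≤ ∑ _i ∈ Finset.range M, (1:ℝ) :=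
            Finset.sum_le_sum (fun i _ => hF_le1 _)
        _ = (M:ℝ) := by simp
    have htail_le : ∀ i : ℕ, F (i + M).succPNat ≤ (N:ℝ) / ζ * (((M:ℝ) + i + 1) ^ (-α)) := by
      intro i
      have h1 := hF_leNp (i + M).succPNat
      have h2 : (((i + M).succPNat : ℕ) : ℝ) = (M:ℝ) + i + 1 := by
        push_cast [Nat.succPNat_coe]
        ring
      calc F (i + M).succPNat ≤ (N:ℝ) * p (i + M).succPNat := h1
        _ = (N:ℝ) / ζ * (((M:ℝ) + i + 1) ^ (-α)) := by
            rw [hpdef]; simp only [h2]; ring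
    have htail : ∑' i : ℕ, F (i + M).succPNat
        ≤ (N:ℝ) / ζ * ((M:ℝ) ^ (1 - α) / (α - 1)) := by
      have hs2 : Summable (fun i : ℕ => (N:ℝ) / ζ * (((M:ℝ) + i + 1) ^ (-α))) :=
        (aux_sumtail α hα M).mul_left _
      have hs1 : Summable (fun i : ℕ => F (i + M).succPNat) := by
        apply hG.comp_injective (add_left_injective M)
      calc ∑' i : ℕ, F (i + M).succPNat
          ≤ ∑' i : ℕ, (N:ℝ) / ζ * (((M:ℝ) + i + 1) ^ (-α)) :=
            Summable.tsum_le_tsum htail_le hs1 hs2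
        _ = (N:ℝ) / ζ * ∑' i : ℕ, ((M:ℝ) + i + 1) ^ (-α) := tsum_mul_left
        _ ≤ (N:ℝ) / ζ * ((M:ℝ) ^ (1 - α) / (α - 1)) := by
            apply mul_le_mul_of_nonneg_left (aux_tail α hα M hM1)
            positivity
    -- bound N/ζ * M^{1-α}/(α-1) ≤ 2^{α-1}/(α-1) * x
    have hbound : (N:ℝ) / ζ * ((M:ℝ) ^ (1 - α) / (α - 1)) ≤ 2 ^ (α - 1) / (α - 1) * x := by
      have hMha : (M:ℝ) ^ (1 - α) ≤ (x / 2) ^ (1 - α) := by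
        apply Real.rpow_le_rpow_of_nonpos (by positivity) (by linarith) (by linarith)
      have hx2 : (x / 2) ^ (1 - α) = x ^ (1 - α) * 2 ^ (α - 1) := by
        have h2e : (2:ℝ) ^ (1 - α) = ((2:ℝ) ^ (α - 1))⁻¹ := by
          rw [show (1 - α) = -(α - 1) by ring, Real.rpow_neg (by norm_num : (0:ℝ) ≤ 2)]
        rw [Real.div_rpow (le_of_lt hx0) (by norm_num : (0:ℝ) ≤ 2), h2e]
        rw [div_inv_eq_mul]
      have hxx : (N:ℝ) * x ^ (1 - α) = x := by
        rw [hNx, ← Real.rpow_add hx0]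
        norm_num
      have hζinv : (N:ℝ) / ζ ≤ (N:ℝ) := by
        rw [div_le_iff₀ hζ0]
        nlinarith
      have hα1 : (0:ℝ) < α - 1 := by linarith
      have hstep : (N:ℝ) / ζ * ((M:ℝ) ^ (1 - α) / (α - 1))
          ≤ (N:ℝ) * ((x / 2) ^ (1 - α) / (α - 1)) := by
        apply mul_le_mul hζinv _ (by positivity) (by positivity)
        gcongr
      calc (N:ℝ) / ζ * ((M:ℝ) ^ (1 - α) / (α - 1))
          ≤ (N:ℝ) * ((x / 2) ^ (1 - α) / (α - 1)) := hstep
        _ = ((N:ℝ) * x ^ (1 - α)) * (2 ^ (α - 1) / (α - 1)) := by rw [hx2]; ring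
        _ = 2 ^ (α - 1) / (α - 1) * x := by rw [hxx]; ring
    rw [hconv, ← hsplit]
    have hC : (1 + 2 ^ (α - 1) / (α - 1)) ≤ max (1 + 2 ^ (α - 1) / (α - 1)) (1 / (2 * (ζ + 1))) :=
      le_max_left _ _
    have hfinal : (M:ℝ) + (N:ℝ) / ζ * ((M:ℝ) ^ (1 - α) / (α - 1))
        ≤ (1 + 2 ^ (α - 1) / (α - 1)) * x := by
      have := hbound
      nlinarith [hMx]
    have hxnn : (0:ℝ) ≤ x := le_of_lt hx0
    calc ∑ i ∈ Finset.range M, F i.succPNat + ∑' i : ℕ, F (i + M).succPNat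
        ≤ (M:ℝ) + (N:ℝ) / ζ * ((M:ℝ) ^ (1 - α) / (α - 1)) := add_le_add hfirst htail
      _ ≤ (1 + 2 ^ (α - 1) / (α - 1)) * x := hfinal
      _ ≤ max (1 + 2 ^ (α - 1) / (α - 1)) (1 / (2 * (ζ + 1))) * x :=
          mul_le_mul_of_nonneg_right hC hxnn
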